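/- Let q > 1 be an integer, χ a Dirichlet character mod q, m the smallest prime not dividing q, and define G₁(s,χ) := -(m^s/(χ(m)·log m))·L'(s,χ), where L(s,χ) is the Dirichlet L-function. Then for all s = σ+it with σ ≥ 2, |G₁(s,χ) - 1| ≤ 2·(1 + 8m/σ)·(1 + 1/m)^{-σ}. -/

import Mathlib

open Real

lemma aux_one_sub_rpow {x p : ℝ} (hx : 0 ≤ x) (hx1 : x ≤ 1) (hp : 1 ≤ p) :
    (1 - x) ^ p * (1 + p * x) ≤ 1 := by
  have h1 : 1 + p * x ≤ (1 + x) ^ p := one_add_mul_self_le_rpow_one_add (by linarith) hp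
  have h2 : (1 - x) ^ p * (1 + x) ^ p = ((1 - x) * (1 + x)) ^ p :=
    (Real.mul_rpow (by linarith) (by linarith)).symm
  have h3 : ((1 - x) * (1 + x)) ^ p ≤ 1 :=
    Real.rpow_le_one (by nlinarith) (by nlinarith) (by linarith)
  have h4 : (0:ℝ) ≤ (1 - x) ^ p := Real.rpow_nonneg (by linarith) _
  calc (1 - x) ^ p * (1 + p * x) ≤ (1 - x) ^ p * (1 + x) ^ p :=
        mul_le_mul_of_nonneg_left h1 h4
    _ ≤ 1 := by rw [h2]; exact h3

set_option maxHeartbeats 2000000 in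
lemma key_step {σ a e : ℝ} (hσ : 2 ≤ σ) (ha : 1 ≤ a)
    (he : (a + σ) / (a * (σ - 1)) ≤ e) :
    Real.log (a + 1) * (a + 1) ^ (-σ) ≤
      ((Real.log a + e) * a ^ (1 - σ) - (Real.log (a + 1) + e) * (a + 1) ^ (1 - σ)) / (σ - 1) := by
  have ha0 : (0:ℝ) < a := by linarith
  have hb0 : (0:ℝ) < a + 1 := by linarith
  have hP : (0:ℝ) < σ - 1 := by linarith
  set u : ℝ := a ^ (1 - σ) with hu
  set v : ℝ := (a + 1) ^ (1 - σ) with hv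
  set w : ℝ := (a + 1) ^ (-σ) with hw
  have hu' : u = a ^ (1 - σ) := hu
  have hv' : v = (a + 1) ^ (1 - σ) := hv
  have hw' : w = (a + 1) ^ (-σ) := hw
  clear_value u v w
  have hupos : 0 < u := hu' ▸ Real.rpow_pos_of_pos ha0 _
  have hvpos : 0 < v := hv' ▸ Real.rpow_pos_of_pos hb0 _
  have hwpos : 0 < w := hw' ▸ Real.rpow_pos_of_pos hb0 _
  have hY : u * a ^ (σ - 1) = 1 := by
    rw [hu', ← Real.rpow_add ha0]; norm_num
  have hZ : v * (a + 1) ^ (σ - 1) = 1 := by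
    rw [hv', ← Real.rpow_add hb0]; norm_num
  have hW : w * (a + 1) ^ σ = 1 := by
    rw [hw', ← Real.rpow_add hb0]; norm_num
  have hYpos : 0 < a ^ (σ - 1) := Real.rpow_pos_of_pos ha0 _
  have hZpos : 0 < (a + 1) ^ (σ - 1) := Real.rpow_pos_of_pos hb0 _
  have hWpos : 0 < (a + 1) ^ σ := Real.rpow_pos_of_pos hb0 _
  -- R1 : (σ-1) * u ≤ (u - v) * (a + σ)
  have hR1 : (σ - 1) * u ≤ (u - v) * (a + σ) := by
    have hx : (0:ℝ) ≤ 1 / (a + 1) := (one_div_pos.mpr hb0).le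
    have hx1 : 1 / (a + 1) ≤ 1 := by rw [div_le_one hb0]; linarith
    have hber := aux_one_sub_rpow hx hx1 (by linarith : (1:ℝ) ≤ σ - 1)
    have h1x : 1 - 1 / (a + 1) = a / (a + 1) := by field_simp; ring
    rw [h1x, Real.div_rpow ha0.le hb0.le] at hber
    -- hber : a^(σ-1)/(a+1)^(σ-1) * (1 + (σ-1)*(1/(a+1))) ≤ 1
    have h2 : a ^ (σ - 1) * (a + σ) ≤ (a + 1) ^ (σ - 1) * (a + 1) := by
      have := mul_le_mul_of_nonneg_right hber (le_of_lt (mul_pos hZpos hb0))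
      field_simp at this
      nlinarith [this]
    -- multiply by u * v ≥ 0 : v * (a+σ) ≤ u * (a+1) ... then
    have h3 : v * (a + σ) ≤ u * (a + 1) := by
      have := mul_le_mul_of_nonneg_right h2 (le_of_lt (mul_pos hupos hvpos))
      nlinarith [this, hY, hZ]
    nlinarith [h3]
  -- R2 : w * (a + σ) ≤ u
  have hR2 : w * (a + σ) ≤ u := by
    have h0a : (0:ℝ) ≤ 1 / a := (one_div_pos.mpr ha0).le
    have hber : 1 + σ * (1 / a) ≤ (1 + 1 / a) ^ σ :=
      one_add_mul_self_le_rpow_one_add (by linarith) (by linarith)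
    have h1x : 1 + 1 / a = (a + 1) / a := by field_simp
    rw [h1x, Real.div_rpow hb0.le ha0.le] at hber
    have haσ : a ^ σ = a ^ (σ - 1) * a := by
      rw [← Real.rpow_add_one ha0.ne' (σ - 1)]; ring_nf
    -- (a+1)^σ ≥ a^(σ-1) * (a + σ)
    have h2 : a ^ (σ - 1) * (a + σ) ≤ (a + 1) ^ σ := by
      have hApos : 0 < a ^ σ := Real.rpow_pos_of_pos ha0 _
      have := mul_le_mul_of_nonneg_right hber hApos.le
      rw [div_mul_cancel₀ _ hApos.ne'] at this
      calc a ^ (σ - 1) * (a + σ) = (1 + σ * (1/a)) * a ^ σ := by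
            rw [haσ]; field_simp
        _ ≤ (a + 1) ^ σ := this
    have := mul_le_mul_of_nonneg_right h2 (le_of_lt (mul_pos hupos hwpos))
    nlinarith [this, hY, hW]
  -- log bound
  have hlog : a * Real.log (a + 1) ≤ a * Real.log a + 1 := by
    have h1 : Real.log ((a + 1) / a) ≤ (a + 1) / a - 1 :=
      Real.log_le_sub_one_of_pos (by positivity)
    rw [Real.log_div hb0.ne' ha0.ne'] at h1
    have h2 : (a + 1) / a - 1 = 1 / a := by field_simp; ring
    rw [h2] at h1
    have h3 := mul_le_mul_of_nonneg_left h1 ha0.le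
    rw [mul_one_div, div_self ha0.ne'] at h3
    linarith
  have hloga : 0 ≤ Real.log a := Real.log_nonneg ha
  have hlogb : 0 ≤ Real.log (a + 1) := Real.log_nonneg (by linarith)
  have he' : a + σ ≤ e * (a * (σ - 1)) := by
    rwa [div_le_iff₀ (mul_pos ha0 hP)] at he
  have hepos : 0 ≤ e :=
    le_trans (div_nonneg (by linarith) (mul_pos ha0 hP).le) he
  -- assemble
  have P1 : (σ - 1) * u * ((Real.log (a+1) + e) * a) ≤
      (u - v) * (a + σ) * ((Real.log (a+1) + e) * a) :=
    mul_le_mul_of_nonneg_right hR1 (mul_nonneg (by linarith) ha0.le)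
  have P2 : (σ - 1) * Real.log (a+1) * (w * (a + σ)) * a ≤ (σ - 1) * Real.log (a+1) * u * a := by
    have := mul_le_mul_of_nonneg_right hR2 (mul_nonneg (mul_nonneg hP.le hlogb) ha0.le)
    nlinarith [this]
  have P3 : (a * Real.log (a+1) - a * Real.log a) * (u * (a + σ)) ≤ u * (a + σ) := by
    have h := mul_le_mul_of_nonneg_right (show a * Real.log (a+1) - a * Real.log a ≤ 1 by linarith)
      (le_of_lt (mul_pos hupos (by linarith : (0:ℝ) < a + σ)))
    nlinarith [h]
  have P4 : (a + σ) * u ≤ e * (a * (σ - 1)) * u :=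
    mul_le_mul_of_nonneg_right he' hupos.le
  have hfin : (σ - 1) * (Real.log (a+1) * w) * (a * (a + σ)) ≤
      ((Real.log a + e) * u - (Real.log (a+1) + e) * v) * (a * (a + σ)) := by
    nlinarith [P1, P2, P3, P4]
  have hcancel : (σ - 1) * (Real.log (a+1) * w) ≤
      (Real.log a + e) * u - (Real.log (a+1) + e) * v :=
    le_of_mul_le_mul_right (by nlinarith [hfin]) (mul_pos ha0 (by linarith : (0:ℝ) < a + σ))
  rw [le_div_iff₀ hP]
  linarith [hcancel]

noncomputable def e0c (m : ℕ) (σ : ℝ) : ℝ := ((m : ℝ) + 1 + σ) / (((m : ℝ) + 1) * (σ - 1))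

noncomputable def Aac (m : ℕ) (σ : ℝ) (n : ℕ) : ℝ :=
  (Real.log n + e0c m σ) * (n : ℝ) ^ (1 - σ) / (σ - 1)

lemma logNatNonneg (n : ℕ) : 0 ≤ Real.log n := by
  rcases Nat.eq_zero_or_pos n with rfl | h
  · simp
  · exact Real.log_nonneg (by exact_mod_cast h)

lemma Aac_nonneg (m : ℕ) {σ : ℝ} (hσ : 2 ≤ σ) (n : ℕ) : 0 ≤ Aac m σ n := by
  have h1 : 0 ≤ e0c m σ := by
    unfold e0c
    apply div_nonneg (by positivity)
    apply mul_nonneg (by positivity)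
    linarith
  have h2 : (0:ℝ) ≤ (n:ℝ) ^ (1 - σ) := Real.rpow_nonneg (Nat.cast_nonneg n) _
  unfold Aac
  apply div_nonneg _ (by linarith)
  exact mul_nonneg (by linarith [logNatNonneg n]) h2

lemma e0c_he {m n : ℕ} {σ : ℝ} (hσ : 2 ≤ σ) (hn : m + 1 ≤ n) :
    ((n:ℝ) + σ) / ((n:ℝ) * (σ - 1)) ≤ e0c m σ := by
  have hn0 : (0:ℝ) < (n:ℝ) := by
    have : (1:ℕ) ≤ n := by omega
    exact_mod_cast Nat.lt_of_lt_of_le Nat.zero_lt_one this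
  have hm1 : (0:ℝ) < (m:ℝ) + 1 := by positivity
  have hP : (0:ℝ) < σ - 1 := by linarith
  have hmn : (m:ℝ) + 1 ≤ (n:ℝ) := by exact_mod_cast hn
  unfold e0c
  rw [div_le_div_iff₀ (mul_pos hn0 hP) (mul_pos hm1 hP)]
  have key : ((n:ℝ) + σ) * ((m:ℝ) + 1) ≤ ((m:ℝ) + 1 + σ) * (n:ℝ) := by nlinarith
  nlinarith [mul_le_mul_of_nonneg_right key hP.le]

/-- telescoping step -/
lemma step_bound (m : ℕ) {σ : ℝ} (hσ : 2 ≤ σ) {n : ℕ} (hn : m + 1 ≤ n) :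
    Real.log (n + 1) * ((n:ℝ) + 1) ^ (-σ) ≤ Aac m σ n - Aac m σ (n + 1) := by
  have ha : (1:ℝ) ≤ (n:ℝ) := by
    have : (1:ℕ) ≤ n := by omega
    exact_mod_cast this
  have h := key_step hσ ha (e0c_he hσ hn)
  unfold Aac
  push_cast
  rw [div_sub_div_same] at *
  convert h using 2 <;> push_cast <;> ring_nf
  
/-- partial sums bound -/
lemma partial_bound (m : ℕ) {σ : ℝ} (hσ : 2 ≤ σ) (G : ℕ → ℝ)
    (hG0 : ∀ n, n ≤ m → G n = 0)
    (hG : ∀ n, m < n → G n = Real.log n * (n:ℝ) ^ (-σ)) (K : ℕ) :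
    ∑ n ∈ Finset.range K, G n ≤
      Real.log ((m:ℝ) + 1) * ((m:ℝ) + 1) ^ (-σ) + Aac m σ (m + 1) := by
  have hGnonneg : ∀ n, 0 ≤ G n := by
    intro n
    rcases le_or_gt n m with h | h
    · rw [hG0 n h]
    · rw [hG n h]
      exact mul_nonneg (logNatNonneg n) (Real.rpow_nonneg (Nat.cast_nonneg n) _)
  have claim : ∀ j : ℕ, ∑ n ∈ Finset.range (m + 2 + j), G n ≤
      Real.log ((m:ℝ) + 1) * ((m:ℝ) + 1) ^ (-σ) + (Aac m σ (m + 1) - Aac m σ (m + 1 + j)) := by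
    intro j
    induction j with
    | zero =>
      have hbase : ∑ n ∈ Finset.range (m + 2), G n = G (m + 1) := by
        apply Finset.sum_eq_single_of_mem (m + 1) (Finset.mem_range.mpr (by omega))
        intro b hb hbne
        exact hG0 b (by simp at hb; omega)
      rw [show m + 2 + 0 = m + 2 from rfl, hbase, hG (m+1) (by omega)]
      push_cast
      simp
    | succ j ih =>
      rw [show m + 2 + (j + 1) = (m + 2 + j) + 1 from rfl, Finset.sum_range_succ]
      have hstep : G (m + 2 + j) ≤ Aac m σ (m + 1 + j) - Aac m σ (m + 2 + j) := by
        rw [hG _ (by omega)]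
        have := step_bound m hσ (n := m + 1 + j) (by omega)
        have hcast : ((m + 2 + j : ℕ) : ℝ) = ((m + 1 + j : ℕ) : ℝ) + 1 := by push_cast; ring
        rw [hcast, show m + 2 + j = (m + 1 + j) + 1 by omega]
        convert this using 3
      have : Aac m σ (m + 1 + (j+1)) = Aac m σ (m + 2 + j) := by congr 1; omega
      rw [this]
      linarith
  calc ∑ n ∈ Finset.range K, G n ≤ ∑ n ∈ Finset.range (m + 2 + K), G n := by
        apply Finset.sum_le_sum_of_subset_of_nonneg
        · exact Finset.range_subset_range.mpr (by omega)
        · intro i _ _; exact hGnonneg i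
    _ ≤ Real.log ((m:ℝ) + 1) * ((m:ℝ) + 1) ^ (-σ) + (Aac m σ (m + 1) - Aac m σ (m + 1 + K)) :=
        claim K
    _ ≤ _ := by linarith [Aac_nonneg m hσ (m + 1 + K)]

set_option maxHeartbeats 1000000 in
lemma final_bound {σ : ℝ} (m : ℕ) (hm : 2 ≤ m) (hσ : 2 ≤ σ) :
    ((m:ℝ) ^ σ / Real.log m) *
      (Real.log ((m:ℝ) + 1) * ((m:ℝ) + 1) ^ (-σ) + Aac m σ (m + 1)) ≤
    2 * (1 + 8 * m / σ) * (1 + 1 / (m:ℝ)) ^ (-σ) := by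
  set M : ℝ := (m:ℝ) with hMdef
  have hM : (2:ℝ) ≤ M := by rw [hMdef]; exact_mod_cast hm
  have hM0 : (0:ℝ) < M := by linarith
  have hM1 : (0:ℝ) < M + 1 := by linarith
  have hσ0 : (0:ℝ) < σ := by linarith
  have hP : (0:ℝ) < σ - 1 := by linarith
  set L : ℝ := Real.log M with hLdef
  set L1 : ℝ := Real.log (M + 1) with hL1def
  have hL : (0.6931 : ℝ) ≤ L := by
    have h2 : Real.log 2 ≤ L := Real.log_le_log (by norm_num) hM
    linarith [Real.log_two_gt_d9]
  have hL0 : (0:ℝ) < L := by linarith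
  have hL1nn : 0 ≤ L1 := Real.log_nonneg (by linarith)
  have hL1 : L1 ≤ 2 * L := by
    have h1 : M + 1 ≤ M ^ 2 := by nlinarith
    have h2 : Real.log (M + 1) ≤ Real.log (M ^ 2) := Real.log_le_log hM1 h1
    rw [Real.log_pow] at h2
    push_cast at h2
    linarith
  have hcast : ((m + 1 : ℕ) : ℝ) = M + 1 := by push_cast; ring
  have hAval : Aac m σ (m + 1) = (L1 + e0c m σ) * (M + 1) ^ (1 - σ) / (σ - 1) := by
    unfold Aac; rw [hcast]
  have hpow1 : (M + 1) ^ (1 - σ) = (M + 1) * (M + 1) ^ (-σ) := by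
    rw [show (1 - σ) = 1 + (-σ) by ring, Real.rpow_add hM1, Real.rpow_one]
  have hpow2 : (1 + 1 / M) ^ (-σ) = M ^ σ * (M + 1) ^ (-σ) := by
    rw [show (1:ℝ) + 1 / M = (M + 1) / M by field_simp,
      Real.div_rpow hM1.le hM0.le, Real.rpow_neg hM0.le σ, div_eq_mul_inv, inv_inv, mul_comm]
  have he0 : (M + 1) * (L1 + e0c m σ) / (σ - 1)
      = (M + 1) * L1 / (σ - 1) + (M + 1 + σ) / (σ - 1) ^ 2 := by
    unfold e0c
    rw [← hMdef]
    field_simp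
  have h1 : (M + 1) * L1 / (σ - 1) ≤ 6 * M * L / σ := by
    rw [div_le_div_iff₀ hP hσ0]
    have hA : L1 * ((M + 1) * σ) ≤ 2 * L * ((M + 1) * σ) :=
      mul_le_mul_of_nonneg_right hL1 (mul_pos hM1 hσ0).le
    have hB : (0:ℝ) ≤ 4 * M * σ - 6 * M - 2 * σ := by nlinarith [(M - 2) * (σ - 2)]
    nlinarith [mul_nonneg hL0.le hB]
  have h2 : (M + 1 + σ) / (σ - 1) ^ 2 ≤ 10 * M * L / σ := by
    rw [div_le_div_iff₀ (by positivity) hσ0]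
    have hq : σ ^ 2 ≤ 4 * (σ - 1) ^ 2 := by nlinarith
    have hr : M + 1 + σ ≤ 1.7 * M * σ := by
      nlinarith [mul_nonneg (by linarith : (0:ℝ) ≤ M - 2) (by linarith : (0:ℝ) ≤ σ - 2)]
    have hs1 : (M + 1 + σ) * σ ≤ 1.7 * M * σ * σ := mul_le_mul_of_nonneg_right hr hσ0.le
    have hs2 : 1.7 * M * σ * σ ≤ 2.5 * L * (M * σ * σ) := by
      have : (1.7:ℝ) ≤ 2.5 * L := by linarith
      nlinarith [mul_le_mul_of_nonneg_right this (by positivity : (0:ℝ) ≤ M * σ * σ)]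
    have hs3 : 2.5 * L * (M * σ * σ) ≤ 10 * M * L * (σ - 1) ^ 2 := by
      nlinarith [mul_le_mul_of_nonneg_left hq (by positivity : (0:ℝ) ≤ 2.5 * L * M)]
    linarith
  have harith : L1 + (M + 1) * (L1 + e0c m σ) / (σ - 1) ≤ L * (2 * (1 + 8 * M / σ)) := by
    have hexp : L * (2 * (1 + 8 * M / σ)) = 2 * L + 16 * M * L / σ := by
      field_simp; ring
    rw [hexp, he0]
    have : 6 * M * L / σ + 10 * M * L / σ = 16 * M * L / σ := by ring
    linarith [h1, h2]
  have hq0 : (0:ℝ) < M ^ σ * (M + 1) ^ (-σ) :=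
    mul_pos (Real.rpow_pos_of_pos hM0 _) (Real.rpow_pos_of_pos hM1 _)
  calc (M ^ σ / L) * (L1 * (M + 1) ^ (-σ) + Aac m σ (m + 1))
      = ((L1 + (M + 1) * (L1 + e0c m σ) / (σ - 1)) / L) * (M ^ σ * (M + 1) ^ (-σ)) := by
        rw [hAval, hpow1]; ring
    _ ≤ (2 * (1 + 8 * M / σ)) * (M ^ σ * (M + 1) ^ (-σ)) := by
        apply mul_le_mul_of_nonneg_right _ hq0.le
        rw [div_le_iff₀ hL0]
        linarith [harith]
    _ = 2 * (1 + 8 * M / σ) * (1 + 1 / M) ^ (-σ) := by rw [hpow2]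

open LSeries

set_option maxHeartbeats 1000000

theorem stmt1 (q : ℕ) (hq : 1 < q) [NeZero q] (χ : DirichletCharacter ℂ q) (m : ℕ)
    (hm_prime : m.Prime) (hm_ndvd : ¬ m ∣ q)
    (hm_min : ∀ p : ℕ, p.Prime → ¬ p ∣ q → m ≤ p)
    (s : ℂ) (hs : 2 ≤ s.re) :
    ‖-((m : ℂ) ^ s / (χ (m : ZMod q) * Real.log m)) *
        deriv (DirichletCharacter.LFunction χ) s - 1‖ ≤
      2 * (1 + 8 * m / s.re) * (1 + 1 / (m : ℝ)) ^ (-s.re) := by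
  have hm2 : 2 ≤ m := hm_prime.two_le
  have hm0 : m ≠ 0 := hm_prime.pos.ne'
  have hσ1 : 1 < s.re := by linarith
  have hq0 : q ≠ 0 := by omega
  have habs : abscissaOfAbsConv (fun n : ℕ => χ n) < s.re := by
    rw [DirichletCharacter.absicssaOfAbsConv_eq_one hq0 χ]
    exact_mod_cast hσ1
  set F : ℕ → ℂ := LSeries.term (LSeries.logMul fun n : ℕ => χ n) s with hF
  have hsum : Summable F := LSeriesSummable_logMul_of_lt_re habs
  set C : ℂ := (m : ℂ) ^ s / (χ ((m : ℕ) : ZMod q) * (Real.log m : ℂ)) with hC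
  set T : ℂ := ∑' n, if n = m then 0 else F n with hT
  have hcop : Nat.Coprime m q := (Nat.Prime.coprime_iff_not_dvd hm_prime).mpr hm_ndvd
  have hunit : IsUnit ((m : ℕ) : ZMod q) := (ZMod.isUnit_iff_coprime m q).mpr hcop
  have hnormχ : ‖χ ((m : ℕ) : ZMod q)‖ = 1 := by
    have := χ.unit_norm_eq_one hunit.unit
    rwa [IsUnit.unit_spec] at this
  have hχ0 : χ ((m : ℕ) : ZMod q) ≠ 0 := by
    intro h; rw [h, norm_zero] at hnormχ; norm_num at hnormχ
  have hmR1 : (1:ℝ) < (m:ℝ) := by exact_mod_cast hm_prime.one_lt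
  have hlogm : 0 < Real.log m := Real.log_pos hmR1
  have hmC0 : (m : ℂ) ≠ 0 := Nat.cast_ne_zero.mpr hm0
  have hpow0 : (m : ℂ) ^ s ≠ 0 := by
    rw [ne_eq, Complex.cpow_eq_zero_iff]
    rintro ⟨h1, -⟩
    exact hmC0 h1
  have hl0 : ((Real.log m : ℝ) : ℂ) ≠ 0 := Complex.ofReal_ne_zero.mpr hlogm.ne'
  have hFm : C * F m = 1 := by
    rw [hF, LSeries.term_of_ne_zero hm0]
    show C * (Complex.log m * χ ((m : ℕ) : ZMod q) / (m : ℂ) ^ s) = 1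
    rw [← Complex.natCast_log, hC, div_mul_div_comm,
      div_eq_one_iff_eq (mul_ne_zero (mul_ne_zero hχ0 hl0) hpow0)]
    ring
  have hLS : LSeries (LSeries.logMul fun n : ℕ => χ n) s = F m + T := by
    rw [hT, hF]
    exact Summable.tsum_eq_add_tsum_ite hsum m
  have hmain : -C * deriv (DirichletCharacter.LFunction χ) s - 1 = C * T := by
    rw [DirichletCharacter.deriv_LFunction_eq_deriv_LSeries χ hσ1, LSeries_deriv habs, hLS]
    have h : -C * -(F m + T) - 1 = C * F m - 1 + C * T := by ring
    rw [h, hFm]; ring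
  -- the comparison series
  set G : ℕ → ℝ := fun n => if n ≤ m then 0 else Real.log n * (n : ℝ) ^ (-s.re) with hG
  have hG0 : ∀ n, n ≤ m → G n = 0 := fun n h => by simp only [hG, if_pos h]
  have hGgt : ∀ n, m < n → G n = Real.log n * (n : ℝ) ^ (-s.re) :=
    fun n h => by simp only [hG, if_neg (Nat.not_le.mpr h)]
  have hGnonneg : ∀ n, 0 ≤ G n := by
    intro n
    rcases le_or_gt n m with h | h
    · rw [hG0 n h]
    · rw [hGgt n h]
      exact mul_nonneg (logNatNonneg n) (Real.rpow_nonneg (Nat.cast_nonneg n) _)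
  have hχzero : ∀ n : ℕ, 2 ≤ n → n < m → χ ((n : ℕ) : ZMod q) = 0 := by
    intro n h2 hlt
    apply MulChar.map_nonunit
    rw [ZMod.isUnit_iff_coprime]
    intro hcopn
    set p := n.minFac with hp
    have hpp : p.Prime := Nat.minFac_prime (by omega)
    have hpn : p ∣ n := Nat.minFac_dvd n
    have hpq : p ∣ q := by
      by_contra hnd
      have := hm_min p hpp hnd
      have hple : p ≤ n := Nat.minFac_le (by omega)
      omega
    have : p ∣ 1 := hcopn ▸ Nat.dvd_gcd hpn hpq
    have := Nat.le_of_dvd Nat.one_pos this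
    have := hpp.two_le
    omega
  have hle : ∀ n, ‖if n = m then 0 else F n‖ ≤ G n := by
    intro n
    rcases eq_or_ne n m with rfl | hne
    · simp [hG0 n le_rfl]
    rw [if_neg hne, hF, LSeries.norm_term_eq]
    rcases eq_or_ne n 0 with rfl | h0
    · simp [hGnonneg 0]
    rw [if_neg h0]
    rcases le_or_gt n m with hlem | hgt
    · -- n < m : numerator vanishes
      have hnum : LSeries.logMul (fun n : ℕ => χ n) n = 0 := by
        rcases eq_or_ne n 1 with rfl | h1
        · simp [LSeries.logMul]
        · have : χ ((n : ℕ) : ZMod q) = 0 := hχzero n (by omega) (by omega)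
          simp [LSeries.logMul, this]
      rw [hnum]
      simpa using hGnonneg n
    · -- m < n
      rw [hGgt n hgt]
      have hnR : (0:ℝ) < (n:ℝ) := by exact_mod_cast Nat.pos_of_ne_zero h0
      have hnorm_num : ‖LSeries.logMul (fun n : ℕ => χ n) n‖ ≤ Real.log n := by
        rw [LSeries.logMul, norm_mul, ← Complex.natCast_log, Complex.norm_real,
          Real.norm_eq_abs, abs_of_nonneg (logNatNonneg n)]
        calc Real.log n * ‖χ ((n : ℕ) : ZMod q)‖ ≤ Real.log n * 1 :=
              mul_le_mul_of_nonneg_left (DirichletCharacter.norm_le_one χ _) (logNatNonneg n)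
          _ = Real.log n := mul_one _
      have hrw : Real.log n * (n : ℝ) ^ (-s.re) = Real.log n / (n : ℝ) ^ s.re := by
        rw [Real.rpow_neg hnR.le, div_eq_mul_inv]
      rw [hrw]
      exact div_le_div_of_nonneg_right hnorm_num (Real.rpow_pos_of_pos hnR _).le
  have hpartial := partial_bound m hs G hG0 hGgt
  have hGsum : Summable G := summable_of_sum_range_le hGnonneg hpartial
  have htsumG : ∑' n, G n ≤
      Real.log ((m:ℝ) + 1) * ((m:ℝ) + 1) ^ (-s.re) + Aac m s.re (m + 1) :=
    Real.tsum_le_of_sum_range_le hGnonneg hpartial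
  have hsumnorm : Summable (fun n => ‖if n = m then 0 else F n‖) :=
    hGsum.of_nonneg_of_le (fun n => norm_nonneg _) hle
  have hTnorm : ‖T‖ ≤ ∑' n, G n :=
    le_trans (norm_tsum_le_tsum_norm hsumnorm) (Summable.tsum_le_tsum hle hsumnorm hGsum)
  have hnormC : ‖C‖ = (m:ℝ) ^ s.re / Real.log m := by
    rw [hC, norm_div, norm_mul, Complex.norm_natCast_cpow_of_pos hm_prime.pos,
      Complex.norm_real, Real.norm_eq_abs, abs_of_pos hlogm, hnormχ, one_mul]
  calc ‖-C * deriv (DirichletCharacter.LFunction χ) s - 1‖ = ‖C * T‖ := by rw [hmain]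
    _ = ‖C‖ * ‖T‖ := norm_mul _ _
    _ ≤ ((m:ℝ) ^ s.re / Real.log m) *
        (Real.log ((m:ℝ) + 1) * ((m:ℝ) + 1) ^ (-s.re) + Aac m s.re (m + 1)) := by
        rw [hnormC]
        exact mul_le_mul_of_nonneg_left (hTnorm.trans htsumG)
          (div_nonneg (Real.rpow_nonneg (Nat.cast_nonneg m) _) hlogm.le)
    _ ≤ 2 * (1 + 8 * m / s.re) * (1 + 1 / (m : ℝ)) ^ (-s.re) := final_bound m hm2 hs
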